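/- For k = 0,…,m, with γ^{(k)} = (α_1-1,…,α_{m-1}-1, β_{k+1}+m-k) and δ^{(k)} = (β_1+1,…,β_k+1, β_{k+2},…,β_{m+1}), the product 𝒴(γ^{(k)})·𝒴(δ^{(k)}) is independent of k; specifically it equals 𝒴(α'-1)·𝒴(β'+1)·y_{1-m}^{-1}, where α'-1 = (α_1-1,…,α_{m-1}-1) and β'+1 = (β_1+1,…,β_{m+1}+1). -/
import Mathlib


/-- `Yprod y m k` is the product `y_m · y_{m-1} ⋯ y_{m+1-k}` for `k ≥ 1`,
`1` for `k = 0`, and `Y(m-k,-k)⁻¹` for `k ≤ -1`. -/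
noncomputable def Yprod {R : Type*} [CommRing R] (y : ℤ → Rˣ) (m k : ℤ) : Rˣ :=
  if 0 ≤ k then ∏ j ∈ Finset.range k.toNat, y (m - j)
  else (∏ j ∈ Finset.range (-k).toNat, y ((m - k) - j))⁻¹

/-- `𝒴(λ) = ∏_{i=1}^n Y(λ_i - i + 1, λ_i)` for a list `λ` of `n` integers
(`0`-indexed, so `λ_i - i + 1` becomes `l i - i`). -/
noncomputable def calY {R : Type*} [CommRing R] (y : ℤ → Rˣ) {n : ℕ}
    (l : Fin n → ℤ) : Rˣ :=
  ∏ i : Fin n, Yprod y (l i - (i : ℕ)) (l i)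

lemma Yprod_succ {R : Type*} [CommRing R] (y : ℤ → Rˣ) (m k : ℤ) :
    Yprod y m (k + 1) = Yprod y m k * y (m - k) := by
  unfold Yprod
  rcases le_or_gt 0 k with hk | hk
  · rw [if_pos (by omega), if_pos hk]
    have h1 : (k+1).toNat = k.toNat + 1 := by omega
    rw [h1, Finset.prod_range_succ]
    congr 2
    omega
  · rcases eq_or_lt_of_le (by omega : k ≤ -1) with rfl | hk2
    · norm_num
    · rw [if_neg (by omega), if_neg (by omega)]
      have h1 : (-k).toNat = (-(k+1)).toNat + 1 := by omega
      rw [h1, Finset.prod_range_succ']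
      push_cast
      have h2 : (∏ j ∈ Finset.range (-(k+1)).toNat, y (m - k - (↑j + 1)))
          = ∏ j ∈ Finset.range (-(k+1)).toNat, y (m - (k+1) - j) := by
        refine Finset.prod_congr rfl fun j _ => ?_
        congr 1; ring
      rw [h2, show m - k - (0:ℤ) = m - k by ring, mul_inv, inv_mul_cancel_right]

lemma Yprod_add {R : Type*} [CommRing R] (y : ℤ → Rˣ) (m k : ℤ) (d : ℕ) :
    Yprod y m (k + d) = Yprod y m k * ∏ s ∈ Finset.range d, y (m - k - s) := by
  induction d with
  | zero => simp
  | succ d ih =>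
      have : k + (d+1:ℕ) = (k + d) + 1 := by push_cast; ring
      rw [this, Yprod_succ, ih, Finset.prod_range_succ, mul_assoc]
      congr 2
      push_cast; ring

lemma key {R : Type*} [CommRing R] (y : ℤ → Rˣ) (n : ℕ) (β : Fin (n+2) → ℤ)
    (k : Fin (n+2)) :
    Yprod y (β k + 1 - (k:ℕ)) (β k + ((n:ℤ)+1) - (k:ℕ)) *
      ∏ i : Fin (n+1), (if (i:ℕ) < (k:ℕ)
        then Yprod y (β (Fin.castSucc i) + 1 - (i:ℕ)) (β (Fin.castSucc i) + 1)
        else Yprod y (β i.succ - (i:ℕ)) (β i.succ)) =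
    (∏ j : Fin (n+2), Yprod y (β j + 1 - (j:ℕ)) (β j + 1)) * (y (-(n:ℤ)))⁻¹ := by
  induction k using Fin.induction with
  | zero =>
      simp only [Fin.val_zero, Nat.cast_zero, sub_zero, Nat.not_lt_zero, if_false]
      conv_rhs => rw [Fin.prod_univ_succ]
      simp only [Fin.val_zero, Nat.cast_zero, sub_zero, Fin.val_succ]
      have h1 : β 0 + ((n:ℤ)+1) = (β 0 + 1) + (n:ℕ) := by push_cast; ring
      rw [h1, Yprod_add]
      have h2 : (∏ s ∈ Finset.range n, y (β 0 + 1 - (β 0 + 1) - s))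
          = ∏ s ∈ Finset.range n, y (-(s:ℤ)) := by
        refine Finset.prod_congr rfl fun s _ => ?_; congr 1; ring
      have h3 : (∏ i : Fin (n+1), Yprod y (β i.succ + 1 - ((i:ℕ)+1:ℕ)) (β i.succ + 1))
          = ∏ i : Fin (n+1), (Yprod y (β i.succ - (i:ℕ)) (β i.succ) * y (-(i:ℕ))) := by
        refine Finset.prod_congr rfl fun i _ => ?_
        have e1 : β i.succ + 1 - ((i:ℕ)+1:ℕ) = β i.succ - (i:ℕ) := by push_cast; ring
        have e2 : β i.succ + 1 = β i.succ + 1 := rfl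
        rw [e1, Yprod_succ]
        congr 1
        congr 1
        ring
      rw [h2, h3, Finset.prod_mul_distrib]
      have h4 : (∏ i : Fin (n+1), y (-((i:ℕ):ℤ))) =
          (∏ s ∈ Finset.range n, y (-(s:ℤ))) * y (-(n:ℤ)) := by
        rw [Fin.prod_univ_castSucc]
        simp only [Fin.coe_castSucc, Fin.val_last]
        rw [Fin.prod_univ_eq_prod_range (fun s : ℕ => y (-(s:ℤ)))]
      rw [h4, eq_mul_inv_iff_mul_eq]
      ac_rfl
  | succ k ih =>
      rw [← ih]
      simp only [Fin.val_succ, Fin.coe_castSucc]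
      rw [← Finset.mul_prod_erase Finset.univ _ (Finset.mem_univ k),
          ← Finset.mul_prod_erase Finset.univ
            (fun i : Fin (n+1) => if (i:ℕ) < (k:ℕ)
              then Yprod y (β (Fin.castSucc i) + 1 - (i:ℕ)) (β (Fin.castSucc i) + 1)
              else Yprod y (β i.succ - (i:ℕ)) (β i.succ)) (Finset.mem_univ k)]
      have hE : (∏ i ∈ Finset.univ.erase k, (if (i:ℕ) < (k:ℕ)+1
            then Yprod y (β (Fin.castSucc i) + 1 - (i:ℕ)) (β (Fin.castSucc i) + 1)
            else Yprod y (β i.succ - (i:ℕ)) (β i.succ)))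
          = ∏ i ∈ Finset.univ.erase k, (if (i:ℕ) < (k:ℕ)
            then Yprod y (β (Fin.castSucc i) + 1 - (i:ℕ)) (β (Fin.castSucc i) + 1)
            else Yprod y (β i.succ - (i:ℕ)) (β i.succ)) := by
        refine Finset.prod_congr rfl fun i hi => ?_
        have hik : (i:ℕ) ≠ (k:ℕ) := Fin.val_ne_of_ne (Finset.ne_of_mem_erase hi)
        by_cases h : (i:ℕ) < (k:ℕ)
        · rw [if_pos h, if_pos (by omega)]
        · rw [if_neg h, if_neg (by omega)]
      rw [hE, if_pos (by omega : (k:ℕ) < (k:ℕ)+1), if_neg (lt_irrefl (k:ℕ))]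
      rw [← mul_assoc, ← mul_assoc]
      congr 1
      -- core identity
      set c := β (Fin.succ k) with hc
      set b := β (Fin.castSucc k) with hb
      have hK : (k:ℕ) ≤ n := by omega
      have e1 : c + 1 - (((k:ℕ)+1 : ℕ):ℤ) = c - ((k:ℕ):ℤ) := by push_cast; ring
      have e2 : c + ((n:ℤ)+1) - (((k:ℕ)+1 : ℕ):ℤ) = c + ((n - (k:ℕ) : ℕ) : ℤ) := by
        push_cast [hK]; ring
      have e3 : b + ((n:ℤ)+1) - ((k:ℕ):ℤ) = (b + 1) + ((n - (k:ℕ) : ℕ) : ℤ) := by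
        push_cast [hK]; ring
      rw [e1, e2, e3, Yprod_add, Yprod_add]
      have h5 : (∏ s ∈ Finset.range (n - (k:ℕ)), y (c - ((k:ℕ):ℤ) - c - s))
          = ∏ s ∈ Finset.range (n - (k:ℕ)), y (-((k:ℕ):ℤ) - s) := by
        refine Finset.prod_congr rfl fun s _ => ?_; congr 1; ring
      have h6 : (∏ s ∈ Finset.range (n - (k:ℕ)), y (b + 1 - ((k:ℕ):ℤ) - (b+1) - s))
          = ∏ s ∈ Finset.range (n - (k:ℕ)), y (-((k:ℕ):ℤ) - s) := by
        refine Finset.prod_congr rfl fun s _ => ?_; congr 1; ring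
      rw [h5, h6]
      ac_rfl

/-- For `k = 0,…,m`, with `γ⁽ᵏ⁾ = (α_1-1,…,α_{m-1}-1, β_{k+1}+m-k)` and
`δ⁽ᵏ⁾ = (β_1+1,…,β_k+1, β_{k+2},…,β_{m+1})`, the product
`𝒴(γ⁽ᵏ⁾)·𝒴(δ⁽ᵏ⁾)` is independent of `k`: it equals
`𝒴(α'-1)·𝒴(β'+1)·y_{1-m}⁻¹`, where `α'-1 = (α_1-1,…,α_{m-1}-1)` and
`β'+1 = (β_1+1,…,β_{m+1}+1)`. -/
theorem stmt16 {R : Type*} [CommRing R] (y : ℤ → Rˣ)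
    (m : ℕ) (hm : 1 ≤ m) (α : Fin (m - 1) → ℤ) (β : Fin (m + 1) → ℤ)
    (k : Fin (m + 1)) :
    calY y (fun i : Fin m =>
        if hi : (i : ℕ) < m - 1 then α ⟨i, hi⟩ - 1
        else β k + (m : ℤ) - (k : ℕ)) *
      calY y (fun i : Fin m =>
        if (i : ℕ) < (k : ℕ) then β (Fin.castSucc i) + 1 else β i.succ) =
    calY y (fun i : Fin (m - 1) => α i - 1) *
      calY y (fun i : Fin (m + 1) => β i + 1) * (y (1 - (m : ℤ)))⁻¹ := by
  obtain ⟨n, rfl⟩ : ∃ n, m = n + 1 := ⟨m - 1, by omega⟩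
  unfold calY
  rw [Fin.prod_univ_castSucc]
  have h1 : (∏ i : Fin n, Yprod y
      ((if hi : ((Fin.castSucc i : Fin (n+1)) : ℕ) < n + 1 - 1
          then α ⟨(Fin.castSucc i : Fin (n+1)), hi⟩ - 1
          else β k + ((n+1 : ℕ) : ℤ) - (k : ℕ)) - ((Fin.castSucc i : Fin (n+1)) : ℕ))
        (if hi : ((Fin.castSucc i : Fin (n+1)) : ℕ) < n + 1 - 1
          then α ⟨(Fin.castSucc i : Fin (n+1)), hi⟩ - 1
          else β k + ((n+1 : ℕ) : ℤ) - (k : ℕ)))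
      = ∏ i : Fin (n + 1 - 1), Yprod y (α i - 1 - (i : ℕ)) (α i - 1) := by
    refine Finset.prod_congr rfl fun i _ => ?_
    rw [dif_pos (show ((Fin.castSucc i : Fin (n+1)) : ℕ) < n + 1 - 1 from i.isLt)]
    simp
  rw [h1]
  beta_reduce
  rw [dif_neg (show ¬ ((Fin.last n : ℕ) < n + 1 - 1) by simp)]
  have h2 : (∏ i : Fin (n+1), Yprod y
      ((if (i : ℕ) < (k : ℕ) then β (Fin.castSucc i) + 1 else β i.succ) - (i : ℕ))
      (if (i : ℕ) < (k : ℕ) then β (Fin.castSucc i) + 1 else β i.succ))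
      = ∏ i : Fin (n+1), (if (i:ℕ) < (k:ℕ)
        then Yprod y (β (Fin.castSucc i) + 1 - (i:ℕ)) (β (Fin.castSucc i) + 1)
        else Yprod y (β i.succ - (i:ℕ)) (β i.succ)) := by
    refine Finset.prod_congr rfl fun i _ => ?_
    split_ifs <;> rfl
  rw [h2]
  have e1 : β k + ((n+1 : ℕ) : ℤ) - (k : ℕ) - ((Fin.last n : ℕ) : ℤ)
      = β k + 1 - (k : ℕ) := by
    simp only [Fin.val_last]; push_cast; ring
  have e2 : β k + ((n+1 : ℕ) : ℤ) - (k : ℕ) = β k + ((n:ℤ)+1) - (k : ℕ) := by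
    push_cast; ring
  rw [e1, e2]
  have e3 : (1 : ℤ) - ((n+1 : ℕ) : ℤ) = -(n:ℤ) := by push_cast; ring
  rw [e3, mul_assoc, mul_assoc]
  congr 1
  exact key y n β k
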